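/- If a finite set S of points in the plane has pairwise distances greater than 1 and all points of S lie within distance 1 of a common point c, then |S| ≤ 5. -/

import Mathlib

open Complex Real

/-- Key geometric lemma: two points in the closed unit disk (punctured at 0)
at distance > 1 from each other have angular separation with cosine < 1/2. -/
lemma cos_arg_sub_lt_half {z w : ℂ} (hz : z ≠ 0) (hw : w ≠ 0)
    (hz1 : ‖z‖ ≤ 1) (hw1 : ‖w‖ ≤ 1)
    (hd : 1 < ‖z - w‖) :
    Real.cos (Complex.arg z - Complex.arg w) < 1 / 2 := by
  have harg : ((Complex.arg (z * (starRingEnd ℂ) w) : Real.Angle)) =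
      ((Complex.arg z - Complex.arg w : ℝ) : Real.Angle) := by
    rw [Complex.arg_mul_coe_angle hz (by simpa using hw), Complex.arg_conj_coe_angle,
      Real.Angle.coe_sub, sub_eq_add_neg]
  have hcos : Real.cos (Complex.arg (z * (starRingEnd ℂ) w)) =
      Real.cos (Complex.arg z - Complex.arg w) := by
    have := congrArg Real.Angle.cos harg
    rw [Real.Angle.cos_coe, Real.Angle.cos_coe] at this
    exact this
  have hre : (z * (starRingEnd ℂ) w).re =
      ‖z‖ * ‖w‖ * Real.cos (Complex.arg z - Complex.arg w) := by
    rw [← hcos, ← Complex.norm_mul_cos_arg (z * (starRingEnd ℂ) w), norm_mul,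
      Complex.norm_conj]
  have hns : Complex.normSq (z - w) = Complex.normSq z + Complex.normSq w
      - 2 * (z * (starRingEnd ℂ) w).re := Complex.normSq_sub z w
  have h1 : (1 : ℝ) < ‖z - w‖ ^ 2 := by nlinarith [norm_nonneg (z - w)]
  rw [Complex.sq_norm, hns, hre] at h1
  have ha : 0 < ‖z‖ := norm_pos_iff.mpr hz
  have hb : 0 < ‖w‖ := norm_pos_iff.mpr hw
  rw [← Complex.sq_norm, ← Complex.sq_norm] at h1
  by_contra hcon
  push_neg at hcon
  nlinarith [mul_pos ha hb, mul_nonneg (sub_nonneg.2 hz1) (sub_nonneg.2 hw1),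
    sq_nonneg (‖z‖ - ‖w‖)]

/-- Combinatorial lemma: a finite set of angles in `(-π, π]` with pairwise
cosine of difference < 1/2 has at most 5 elements. -/
lemma angles_card_le_five (T : Finset ℝ)
    (hT : ∀ a ∈ T, ∀ b ∈ T, a ≠ b → Real.cos (a - b) < 1 / 2)
    (hrange : ∀ a ∈ T, -π < a ∧ a ≤ π) :
    T.card ≤ 5 := by
  by_contra hcard
  push_neg at hcard
  obtain ⟨T', hT'sub, hT'card⟩ := Finset.exists_subset_card_eq hcard
  set f := T'.orderIsoOfFin hT'card with hf
  set g : Fin 6 → ℝ := fun i => (f i : ℝ) with hg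
  have hgmono : StrictMono g := fun i j hij => f.strictMono hij
  have hmem : ∀ i, g i ∈ T := fun i => hT'sub (f i).2
  -- each "gap" between g-values is > π/3
  have hgap : ∀ i j : Fin 6, i < j → π / 3 < g j - g i := by
    intro i j hij
    have h0 : 0 < g j - g i := sub_pos.2 (hgmono hij)
    have hcos := hT _ (hmem j) _ (hmem i) (ne_of_gt (hgmono hij))
    by_contra hle
    push_neg at hle
    have : Real.cos (π / 3) ≤ Real.cos (g j - g i) := by
      apply Real.cos_le_cos_of_nonneg_of_le_pi (le_of_lt h0) _ hle
      linarith [Real.pi_pos]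
    rw [Real.cos_pi_div_three] at this
    linarith
  have h01 := hgap 0 1 (by decide)
  have h12 := hgap 1 2 (by decide)
  have h23 := hgap 2 3 (by decide)
  have h34 := hgap 3 4 (by decide)
  have h45 := hgap 4 5 (by decide)
  have hbig : 5 * (π / 3) < g 5 - g 0 := by linarith
  have hlt2pi : g 5 - g 0 < 2 * π := by
    have h0 := hrange _ (hmem 0)
    have h5 := hrange _ (hmem 5)
    linarith [h0.1, h5.2]
  -- but cos (g 5 - g 0) < 1/2 while g 5 - g 0 ∈ (5π/3, 2π) forces cos > 1/2
  have hcos := hT _ (hmem 5) _ (hmem 0) (ne_of_gt (hgmono (by decide : (0:Fin 6) < 5)))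
  have heq : Real.cos (g 5 - g 0) = Real.cos (2 * π - (g 5 - g 0)) := by
    rw [Real.cos_two_pi_sub]
  have h2 : Real.cos (2 * π - (g 5 - g 0)) ≥ Real.cos (π / 3) := by
    apply Real.cos_le_cos_of_nonneg_of_le_pi (by linarith) _ (by linarith)
    linarith [Real.pi_pos]
  rw [Real.cos_pi_div_three] at h2
  rw [heq] at hcos
  linarith

/-- Complex version of the packing statement. -/
lemma packing_complex (S : Finset ℂ) (c : ℂ) (hc : c ∉ S)
    (hS : ∀ x ∈ S, ∀ y ∈ S, x ≠ y → 1 < dist x y)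
    (hball : ∀ x ∈ S, dist x c ≤ 1) :
    S.card ≤ 5 := by
  have hne : ∀ x ∈ S, x - c ≠ 0 := by
    intro x hx
    have : x ≠ c := fun h => hc (h ▸ hx)
    exact sub_ne_zero.2 this
  have habs : ∀ x ∈ S, ‖x - c‖ ≤ 1 := by
    intro x hx
    simpa [Complex.dist_eq] using hball x hx
  have hkey : ∀ x ∈ S, ∀ y ∈ S, x ≠ y →
      Real.cos (Complex.arg (x - c) - Complex.arg (y - c)) < 1 / 2 := by
    intro x hx y hy hxy
    apply cos_arg_sub_lt_half (hne x hx) (hne y hy) (habs x hx) (habs y hy)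
    have : (x - c) - (y - c) = x - y := by ring
    rw [this]
    simpa [Complex.dist_eq] using hS x hx y hy hxy
  set θ : ℂ → ℝ := fun x => Complex.arg (x - c) with hθ
  have hinj : ∀ x ∈ S, ∀ y ∈ S, θ x = θ y → x = y := by
    intro x hx y hy hxy
    by_contra hne'
    have := hkey x hx y hy hne'
    rw [show (x - c).arg = (y - c).arg from hxy, sub_self, Real.cos_zero] at this
    linarith
  have hcard : (S.image θ).card = S.card := Finset.card_image_of_injOn hinj
  have := angles_card_le_five (S.image θ)
    (by
      intro a ha b hb hab
      obtain ⟨x, hx, rfl⟩ := Finset.mem_image.1 ha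
      obtain ⟨y, hy, rfl⟩ := Finset.mem_image.1 hb
      exact hkey x hx y hy (fun h => hab (by rw [h])))
    (by
      intro a ha
      obtain ⟨x, hx, rfl⟩ := Finset.mem_image.1 ha
      exact ⟨Complex.neg_pi_lt_arg _, Complex.arg_le_pi _⟩)
  omega

/-- A finite set of points in the plane with pairwise distances greater than 1,
all lying within distance 1 of a common point `c ∉ S`, has at most 5 elements. -/
theorem packing_unit_disk_at_most_five
    (S : Finset (EuclideanSpace ℝ (Fin 2)))
    (c : EuclideanSpace ℝ (Fin 2)) (hc : c ∉ S)
    (hS : ∀ x ∈ S, ∀ y ∈ S, x ≠ y → 1 < dist x y)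
    (hball : ∀ x ∈ S, dist x c ≤ 1) :
    S.card ≤ 5 := by
  set e : EuclideanSpace ℝ (Fin 2) ≃ₗᵢ[ℝ] ℂ := Complex.orthonormalBasisOneI.repr.symm with he
  have hinj : Function.Injective e := e.injective
  have hcard : (S.image (⇑e)).card = S.card := Finset.card_image_of_injective S hinj
  rw [← hcard]
  apply packing_complex (S.image ⇑e) (e c)
  · intro hmem
    obtain ⟨x, hx, hxe⟩ := Finset.mem_image.1 hmem
    exact hc ((hinj hxe) ▸ hx)
  · intro a ha b hb hab
    obtain ⟨x, hx, rfl⟩ := Finset.mem_image.1 ha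
    obtain ⟨y, hy, rfl⟩ := Finset.mem_image.1 hb
    rw [e.dist_map]
    exact hS x hx y hy (fun h => hab (by rw [h]))
  · intro a ha
    obtain ⟨x, hx, rfl⟩ := Finset.mem_image.1 ha
    rw [e.dist_map]
    exact hball x hx
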